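/- In the real quaternion algebra ℍ, there is no quaternion x satisfying the linear equation (i + j)·x·k + k·x·(j + 1) = 1 + k. -/

import Mathlib

open Quaternion

/-- The quaternion unit `i`. -/
noncomputable def qi : ℍ[ℝ] := ⟨0, 1, 0, 0⟩
/-- The quaternion unit `j`. -/
noncomputable def qj : ℍ[ℝ] := ⟨0, 0, 1, 0⟩
/-- The quaternion unit `k`. -/
noncomputable def qk : ℍ[ℝ] := ⟨0, 0, 0, 1⟩

/-- no quaternion `x` satisfies
`(i + j)·x·k + k·x·(j + 1) = 1 + k`. -/
theorem no_solution_of_linear_equation :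
    ¬ ∃ x : ℍ[ℝ], (qi + qj) * x * qk + qk * x * (qj + 1) = 1 + qk := by
  rintro ⟨x, h⟩
  simp only [Quaternion.ext_iff, Quaternion.re_mul, Quaternion.imI_mul,
    Quaternion.imJ_mul, Quaternion.imK_mul, Quaternion.re_add, Quaternion.imI_add,
    Quaternion.imJ_add, Quaternion.imK_add, Quaternion.re_one, Quaternion.imI_one,
    Quaternion.imJ_one, Quaternion.imK_one] at h
  simp only [qi, qj, qk] at h
  obtain ⟨h1,h2,h3,h4⟩ := h
  linarith
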